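/- Suppose μ is a positive finite Borel measure on ∂T solving M(α)(1 − IM_p(b(α))) = Σ_{β≥α} M(β)^{p′} for all edges α, where M = I*μ and M_p = M^{p′−1}, and suppose additionally that IM_p ≡ 1 everywhere on supp(μ). Then μ is the p-equilibrium measure of supp(μ). -/

import Mathlib

open scoped ENNReal
open MeasureTheory

/-- A locally finite rooted tree, given by its set of edges. The root edge has no parent,
every other edge has a parent, and every edge has finitely many children. -/
structure RTree where
  E : Type
  root : E
  parent : E → Option E
  parent_root : parent root = none
  parent_isSome : ∀ α, α ≠ root → (parent α).isSome
  level : E → ℕ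
  level_root : level root = 0
  level_parent : ∀ α β, parent α = some β → level α = level β + 1
  locFin : ∀ α, {β | parent β = some α}.Finite

namespace RTree

variable (T : RTree)

/-- `Le T α β` : the edge `α` is an ancestor of (or equal to) the edge `β`,
i.e. `α ≤ β` in the natural partial order on edges. -/
def Le (α β : T.E) : Prop :=
  Relation.ReflTransGen (fun x y => T.parent y = some x) α β

/-- The boundary of `T`: half-infinite geodesics starting at the root edge. -/
structure Boundary where
  seq : ℕ → T.E
  seq_zero : seq 0 = T.root
  seq_parent : ∀ n, T.parent (seq (n + 1)) = some (seq n)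

/-- The boundary `∂T_α` of the tent over the edge `α`: boundary points whose
geodesic passes through `α`. -/
def tentB (α : T.E) : Set T.Boundary := {ζ | ∃ n, ζ.seq n = α}

/-- The standard topology on the boundary, with the tent boundaries as a basis. -/
def ttop : TopologicalSpace T.Boundary :=
  TopologicalSpace.generateFrom {s | ∃ α, s = T.tentB α}

/-- The Borel σ-algebra on the boundary. -/
def tborel : MeasurableSpace T.Boundary := @borel _ T.ttop

/-- The set of edges of the tent `T_α`. -/
def tentE (α : T.E) : Set T.E := {β | T.Le α β}

/-- The relative potential `I_α f (ζ)`, summing `f` over the edges of the geodesic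
from the root to `ζ` that lie in the tent `T_α`.  Taking `α` to be the root edge
gives the potential `If`. -/
noncomputable def relPot (α : T.E) (f : T.E → ℝ≥0∞) (ζ : T.Boundary) : ℝ≥0∞ :=
  ∑' n, Set.indicator (T.tentE α) f (ζ.seq n)

/-- The relative `p`-energy `‖f‖_{ℓ^p(E(T_α))}^p`. -/
noncomputable def relEnergy (p : ℝ) (α : T.E) (f : T.E → ℝ≥0∞) : ℝ≥0∞ :=
  ∑' β, Set.indicator (T.tentE α) (fun γ => f γ ^ p) β

/-- The relative `p`-capacity `c_{p,α}(E)` of `E ⊆ ∂T`, with the tent `T_α`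
as ambient tree. -/
noncomputable def relCap (p : ℝ) (α : T.E) (E : Set T.Boundary) : ℝ≥0∞ :=
  ⨅ f ∈ {f : T.E → ℝ≥0∞ | ∀ ζ ∈ E, 1 ≤ T.relPot α f ζ}, T.relEnergy p α f

/-- The `p`-capacity of a subset of the boundary. -/
noncomputable def cap (p : ℝ) (E : Set T.Boundary) : ℝ≥0∞ := T.relCap p T.root E

end RTree

namespace RTree

variable (T : RTree)

/-- `IM_p(b(α))` : the sum of `M_p = M^{q-1}` over the strict ancestors of the
edge `α`, where `M` is the co-potential of `μ`. -/
noncomputable def belowSum (q : ℝ) (μ : @Measure T.Boundary T.tborel) (α : T.E) : ℝ≥0∞ :=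
  ∑' β : T.E, Set.indicator {γ | T.Le γ α ∧ γ ≠ α}
    (fun γ => μ (T.tentB γ) ^ (q - 1)) β

/-- `μ` is the `p`-equilibrium measure of `E` relative to the tent rooted at `α`
(here `q = p'` is the conjugate exponent of `p`): `μ` is supported on the closure
of `E`, its potential is at least `1` on `E` off a set of zero capacity
(admissibility of `M_p = M^{q-1}`), the energy of `μ` equals the capacity of `E`
(so `M_p` is the capacitary minimizer), and the total mass of `μ` equals the
capacity of `E`. -/
def IsEqMeasure (p q : ℝ) (α : T.E) (E : Set T.Boundary)
    (μ : @Measure T.Boundary T.tborel) : Prop :=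
  μ ((@closure _ T.ttop E)ᶜ) = 0 ∧
  (∃ Z : Set T.Boundary, T.relCap p α Z = 0 ∧
    ∀ ζ ∈ E \ Z, 1 ≤ T.relPot α (fun β => μ (T.tentB β) ^ (q - 1)) ζ) ∧
  T.relEnergy p α (fun β => μ (T.tentB β) ^ (q - 1)) = T.relCap p α E ∧
  μ Set.univ = T.relCap p α E

end RTree

open RTree
namespace Stmt16Aux

variable (T : RTree)

lemma level_zero {α : T.E} (h : T.level α = 0) : α = T.root := by
  by_contra hne
  obtain ⟨β, hβ⟩ := Option.isSome_iff_exists.mp (T.parent_isSome α hne)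
  have := T.level_parent α β hβ
  omega

lemma root_le (α : T.E) : T.Le T.root α := by
  suffices h : ∀ n α, T.level α = n → T.Le T.root α from h _ α rfl
  intro n
  induction n using Nat.strong_induction_on with
  | _ n ih =>
    intro α hα
    rcases eq_or_ne α T.root with rfl | hne
    · exact Relation.ReflTransGen.refl
    · obtain ⟨β, hβ⟩ := Option.isSome_iff_exists.mp (T.parent_isSome α hne)
      have hl := T.level_parent α β hβ
      exact (ih (T.level β) (by omega) β rfl).tail hβ

lemma le_root {γ : T.E} (h : T.Le γ T.root) : γ = T.root := by
  rcases Relation.ReflTransGen.cases_tail h with h | ⟨c, _, hc⟩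
  · exact h.symm
  · rw [T.parent_root] at hc; exact absurd hc (by simp)

lemma tentE_root : T.tentE T.root = Set.univ :=
  Set.eq_univ_of_forall fun α => root_le T α

lemma tentB_root : T.tentB T.root = Set.univ :=
  Set.eq_univ_of_forall fun ζ => ⟨0, ζ.seq_zero⟩

lemma level_seq (ζ : T.Boundary) : ∀ n, T.level (ζ.seq n) = n := by
  intro n
  induction n with
  | zero => rw [ζ.seq_zero, T.level_root]
  | succ n ih => rw [T.level_parent _ _ (ζ.seq_parent n), ih]

lemma seq_injective (ζ : T.Boundary) : Function.Injective ζ.seq := by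
  intro m n h
  have h1 := level_seq T ζ m
  rw [h, level_seq] at h1
  omega

lemma level_finite (n : ℕ) : {α : T.E | T.level α = n}.Finite := by
  induction n with
  | zero =>
    exact (Set.finite_singleton T.root).subset fun α hα => level_zero T hα
  | succ n ih =>
    apply (ih.biUnion (fun β _ => T.locFin β)).subset
    intro α hα
    simp only [Set.mem_setOf_eq] at hα
    have hne : α ≠ T.root := by
      rintro rfl; rw [T.level_root] at hα; omega
    obtain ⟨β, hβ⟩ := Option.isSome_iff_exists.mp (T.parent_isSome α hne)
    have hl := T.level_parent α β hβ
    exact Set.mem_biUnion (show T.level β = n by omega) hβ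

lemma countableE : Countable T.E := by
  rw [← Set.countable_univ_iff]
  have : (Set.univ : Set T.E) = ⋃ n, {α | T.level α = n} := by
    ext α; simp
  rw [this]
  exact Set.countable_iUnion fun n => (level_finite T n).countable

lemma meas_tentB (α : T.E) : MeasurableSet[T.tborel] (T.tentB α) := by
  have h : @IsOpen _ T.ttop (T.tentB α) := TopologicalSpace.isOpen_generateFrom_of_mem ⟨α, rfl⟩
  exact MeasurableSpace.measurableSet_generateFrom h

lemma relPot_eq (f : T.E → ℝ≥0∞) (ζ : T.Boundary) :
    T.relPot T.root f ζ = ∑' β, Set.indicator (T.tentB β) (fun _ => f β) ζ := by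
  have h1 : T.relPot T.root f ζ = ∑' n, f (ζ.seq n) := by
    unfold RTree.relPot
    rw [tentE_root, Set.indicator_univ]
  rw [h1]
  have h2 : ∑' n, Set.indicator (T.tentB (ζ.seq n)) (fun _ => f (ζ.seq n)) ζ
      = ∑' β, Set.indicator (T.tentB β) (fun _ => f β) ζ := by
    apply Function.Injective.tsum_eq
      (f := fun β => Set.indicator (T.tentB β) (fun _ => f β) ζ) (seq_injective T ζ)
    intro β hβ
    have hmem : ζ ∈ T.tentB β := by
      by_contra hc
      exact hβ (Set.indicator_of_notMem hc _)
    obtain ⟨n, hn⟩ := hmem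
    exact ⟨n, hn⟩
  rw [← h2]
  exact tsum_congr fun n =>
    (Set.indicator_of_mem (show ζ ∈ T.tentB (ζ.seq n) from ⟨n, rfl⟩)
      (fun _ => f (ζ.seq n))).symm

lemma lint_relPot (μ : @Measure T.Boundary T.tborel) (f : T.E → ℝ≥0∞) :
    @lintegral _ T.tborel μ (T.relPot T.root f) = ∑' β, f β * μ (T.tentB β) := by
  letI := T.ttop
  letI := T.tborel
  haveI : Countable T.E := countableE T
  calc ∫⁻ ζ, T.relPot T.root f ζ ∂μ
      = ∫⁻ ζ, ∑' β, Set.indicator (T.tentB β) (fun _ => f β) ζ ∂μ := by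
        apply lintegral_congr
        intro ζ
        exact relPot_eq T f ζ
    _ = ∑' β, ∫⁻ ζ, Set.indicator (T.tentB β) (fun _ => f β) ζ ∂μ :=
        lintegral_tsum fun β => (measurable_const.indicator (meas_tentB T β)).aemeasurable
    _ = ∑' β, f β * μ (T.tentB β) :=
        tsum_congr fun β => lintegral_indicator_const (meas_tentB T β) (f β)

lemma relEnergy_eq (p : ℝ) (f : T.E → ℝ≥0∞) :
    T.relEnergy p T.root f = ∑' β, f β ^ p := by
  unfold RTree.relEnergy
  rw [tentE_root, Set.indicator_univ]

lemma belowSum_root (q : ℝ) (μ : @Measure T.Boundary T.tborel) :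
    T.belowSum q μ T.root = 0 := by
  unfold RTree.belowSum
  have h : {γ : T.E | T.Le γ T.root ∧ γ ≠ T.root} = ∅ := by
    ext γ
    simp only [Set.mem_setOf_eq, Set.mem_empty_iff_false, iff_false, not_and, ne_eq, not_not]
    exact fun hle => le_root T hle
  rw [h]
  simp

lemma holder {ι : Type} [Countable ι] {p q : ℝ} (hpq : p.HolderConjugate q)
    (f g : ι → ℝ≥0∞) :
    ∑' i, f i * g i ≤ (∑' i, f i ^ p) ^ (1 / p) * (∑' i, g i ^ q) ^ (1 / q) := by
  letI : MeasurableSpace ι := ⊤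
  haveI : MeasurableSingletonClass ι := ⟨fun _ => trivial⟩
  have h := ENNReal.lintegral_mul_le_Lp_mul_Lq (Measure.count : Measure ι) hpq
    (measurable_from_top (f := f)).aemeasurable (measurable_from_top (f := g)).aemeasurable
  simpa [lintegral_count] using h

end Stmt16Aux

open Stmt16Aux in
theorem stmt16 (T : RTree) (p q : ℝ) (hp : 1 < p) (hpq : 1 / p + 1 / q = 1)
    (μ : @Measure T.Boundary T.tborel) (hfin : @IsFiniteMeasure _ _ μ)
    (heq : ∀ α : T.E, μ (T.tentB α) * (1 - T.belowSum q μ α) =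
      ∑' β : T.E, Set.indicator (T.tentE α) (fun γ => μ (T.tentB γ) ^ q) β)
    (hpot : ∀ ζ ∈ {ζ : T.Boundary | ∀ α : T.E, ζ ∈ T.tentB α → μ (T.tentB α) ≠ 0},
      T.relPot T.root (fun β => μ (T.tentB β) ^ (q - 1)) ζ = 1) :
    T.IsEqMeasure p q T.root
      {ζ : T.Boundary | ∀ α : T.E, ζ ∈ T.tentB α → μ (T.tentB α) ≠ 0} μ := by
  letI := T.ttop
  letI := T.tborel
  haveI : Countable T.E := countableE T
  haveI := hfin
  have hcj : p.HolderConjugate q := Real.holderConjugate_iff.mpr ⟨hp, by rw [← one_div p, ← one_div q]; exact hpq⟩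
  have hp0 : (0:ℝ) < p := hcj.pos
  have hq0 : (0:ℝ) < q := hcj.symm.pos
  have hqp : (q - 1) * p = q := hcj.symm.sub_one_mul_conj
  set S := {ζ : T.Boundary | ∀ α : T.E, ζ ∈ T.tentB α → μ (T.tentB α) ≠ 0} with hSdef
  set En := ∑' β : T.E, μ (T.tentB β) ^ q with hEndef
  have hEnuniv : μ Set.univ = En := by
    have h := heq T.root
    rw [belowSum_root, tsub_zero, mul_one, tentB_root] at h
    rw [h, hEndef]
    exact tsum_congr fun β => by rw [tentE_root, Set.indicator_univ]
  have hEntop : En ≠ ⊤ := by rw [← hEnuniv]; exact (measure_lt_top μ _).ne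
  have hSceq : Sᶜ = ⋃ α : {α : T.E // μ (T.tentB α) = 0}, T.tentB (α : T.E) := by
    ext ζ
    simp only [Set.mem_compl_iff, hSdef, Set.mem_setOf_eq, Set.mem_iUnion]
    push_neg
    constructor
    · rintro ⟨α, hζ, h0⟩; exact ⟨⟨α, h0⟩, hζ⟩
    · rintro ⟨⟨α, h0⟩, hζ⟩; exact ⟨α, hζ, h0⟩
  have hScm : MeasurableSet Sᶜ := by
    rw [hSceq]; exact MeasurableSet.iUnion fun α => meas_tentB T _
  have hSc0 : μ Sᶜ = 0 := by
    rw [hSceq]; exact measure_iUnion_null fun α => α.2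
  have hSm : MeasurableSet S := by
    have := hScm.compl; rwa [compl_compl] at this
  have hμS : μ S = μ Set.univ := by
    have h := measure_add_measure_compl (μ := μ) hSm
    rw [hSc0, add_zero] at h; exact h
  have hEnergyMp : T.relEnergy p T.root (fun β => μ (T.tentB β) ^ (q - 1)) = En := by
    rw [relEnergy_eq, hEndef]
    exact tsum_congr fun β => by rw [← ENNReal.rpow_mul, hqp]
  have hcaple : T.relCap p T.root S ≤ En := by
    rw [← hEnergyMp]
    unfold RTree.relCap
    exact iInf₂_le _ fun ζ hζ => le_of_eq (hpot ζ hζ).symm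
  have hcapge : En ≤ T.relCap p T.root S := by
    unfold RTree.relCap
    refine le_iInf₂ ?_
    intro f hf
    rw [relEnergy_eq]
    rcases eq_or_ne En 0 with h0 | h0
    · rw [h0]; exact zero_le
    have key : En ≤ (∑' β, f β ^ p) ^ (1/p) * En ^ (1/q) := by
      calc En = μ S := (hμS.trans hEnuniv).symm
        _ = ∫⁻ ζ, S.indicator 1 ζ ∂μ := (lintegral_indicator_one hSm).symm
        _ ≤ ∫⁻ ζ, T.relPot T.root f ζ ∂μ := by
            apply lintegral_mono
            intro ζ
            by_cases hζ : ζ ∈ S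
            · rw [Set.indicator_of_mem hζ]; exact hf ζ hζ
            · rw [Set.indicator_of_notMem hζ]; exact zero_le
        _ = ∑' β, f β * μ (T.tentB β) := lint_relPot T μ f
        _ ≤ (∑' β, f β ^ p) ^ (1/p) * (∑' β, μ (T.tentB β) ^ q) ^ (1/q) :=
            holder hcj _ _
        _ = (∑' β, f β ^ p) ^ (1/p) * En ^ (1/q) := by rw [hEndef]
    have hEq : En ^ (1/p) * En ^ (1/q) = En := by
      rw [← ENNReal.rpow_add _ _ h0 hEntop, hpq, ENNReal.rpow_one]
    have hne : En ^ (1/q) ≠ 0 :=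
      (ENNReal.rpow_pos (pos_iff_ne_zero.mpr h0) hEntop).ne'
    have hnt : En ^ (1/q) ≠ ⊤ :=
      ENNReal.rpow_ne_top_of_nonneg (by positivity) hEntop
    have hcan : En ^ (1/p) ≤ (∑' β, f β ^ p) ^ (1/p) := by
      rw [← ENNReal.mul_le_mul_iff_left hne hnt, hEq]
      exact key
    calc En = (En ^ (1/p)) ^ p := by
          rw [← ENNReal.rpow_mul, one_div, inv_mul_cancel₀ hp0.ne', ENNReal.rpow_one]
      _ ≤ ((∑' β, f β ^ p) ^ (1/p)) ^ p := ENNReal.rpow_le_rpow hcan hp0.le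
      _ = ∑' β, f β ^ p := by
          rw [← ENNReal.rpow_mul, one_div, inv_mul_cancel₀ hp0.ne', ENNReal.rpow_one]
  have hcap : T.relCap p T.root S = En := le_antisymm hcaple hcapge
  have hcap0 : T.relCap p T.root (∅ : Set T.Boundary) = 0 := by
    refine le_antisymm ?_ zero_le
    unfold RTree.relCap
    refine le_trans (iInf₂_le (fun _ : T.E => (0:ℝ≥0∞))
      (fun ζ h => absurd h (Set.notMem_empty ζ))) ?_
    rw [relEnergy_eq]
    simp [ENNReal.zero_rpow_of_pos hp0]
  have hsub : (@closure _ T.ttop S)ᶜ ⊆ Sᶜ :=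
    Set.compl_subset_compl.mpr subset_closure
  exact ⟨measure_mono_null hsub hSc0,
    ⟨∅, hcap0, fun ζ hζ => le_of_eq (hpot ζ hζ.1).symm⟩,
    hEnergyMp.trans hcap.symm, hEnuniv.trans hcap.symm⟩
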